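/- Let v : 2^O → ℝ be an order-neutral submodular function and τ ∈ ℝ, with β^τ(S) the number of entries ≥ τ in the sorted telescoping sum vector of S. Then for any bundle X ⊆ O there exist disjoint sets X^{≥τ}, X^{<τ} with X^{≥τ} ∪ X^{<τ} = X such that β^τ(X) = β^τ(X^{≥τ}) = |X^{≥τ}|. -/

import Mathlib

open Finset

/-- A set function is submodular: `v ∅ = 0` and decreasing marginal gains. -/
def Submodular {α : Type*} [DecidableEq α] (v : Finset α → ℝ) : Prop :=
  v ∅ = 0 ∧ ∀ S T : Finset α, S ⊆ T → ∀ o ∉ T,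
    v (insert o T) - v T ≤ v (insert o S) - v S

/-- The telescoping sum vector of marginal gains along an ordering `l`. -/
def margList {α : Type*} [DecidableEq α] (v : Finset α → ℝ) (l : List α) : List ℝ :=
  (List.range l.length).map fun j =>
    v ((l.take (j + 1)).toFinset) - v ((l.take j).toFinset)

/-- The sorted (ascending) telescoping sum vector. -/
noncomputable def sortedVec {α : Type*} [DecidableEq α] (v : Finset α → ℝ) (l : List α) :
    List ℝ :=
  Multiset.sort (margList v l) (· ≤ ·)

/-- `l` is an ordering of the bundle `S`. -/
def IsOrdering {α : Type*} [DecidableEq α] (l : List α) (S : Finset α) : Prop :=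
  l.Nodup ∧ l.toFinset = S

/-- Order-neutrality: any two orderings of a bundle give the same sorted telescoping
sum vector. -/
def OrderNeutral {α : Type*} [DecidableEq α] (v : Finset α → ℝ) : Prop :=
  ∀ (S : Finset α) (l₁ l₂ : List α), IsOrdering l₁ S → IsOrdering l₂ S →
    sortedVec v l₁ = sortedVec v l₂

lemma margList_append_singleton {α : Type*} [DecidableEq α] (v : Finset α → ℝ)
    (l : List α) (x : α) :
    margList v (l ++ [x]) = margList v l ++ [v (l ++ [x]).toFinset - v l.toFinset] := by
  unfold margList
  rw [List.length_append, List.length_singleton, List.range_succ, List.map_append]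
  congr 1
  · apply List.map_congr_left
    intro j hj
    simp only [List.mem_range] at hj
    rw [List.take_append_of_le_length (by omega), List.take_append_of_le_length (by omega)]
  · simp only [List.map_cons, List.map_nil]
    rw [List.take_left, show l.length + 1 = (l ++ [x]).length by simp, List.take_length]

/-- decomposition of any bundle `X` into a clean part `X^{≥τ}` and a
supplementary part `X^{<τ}` with `β^τ(X) = β^τ(X^{≥τ}) = |X^{≥τ}|`. -/
theorem decomposition_exists {α : Type*} [Fintype α] [DecidableEq α]
    (v : Finset α → ℝ) (τ : ℝ) (hsub : Submodular v) (hon : OrderNeutral v)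
    (β : Finset α → ℕ)
    (hβ : ∀ (S : Finset α) (l : List α), IsOrdering l S →
      β S = (margList v l).countP (fun x => decide (τ ≤ x))) :
    ∀ X : Finset α, ∃ A B : Finset α,
      Disjoint A B ∧ A ∪ B = X ∧ β X = β A ∧ β A = A.card := by
  intro X
  induction X using Finset.strongInduction with
  | _ X ih =>
  by_cases hcase : β X = X.card
  · exact ⟨X, ∅, Finset.disjoint_empty_right _, Finset.union_empty _, rfl, hcase⟩
  · have hlX : IsOrdering X.toList X := ⟨X.nodup_toList, X.toList_toFinset⟩
    have h1 := hβ X X.toList hlX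
    have hlen : X.toList.length = X.card := X.length_toList
    have hmlen : (margList v X.toList).length = X.card := by
      simp [margList, hlen]
    have hlt : β X < X.card := by
      have hle := List.countP_le_length (p := fun x => decide (τ ≤ x)) (l := margList v X.toList)
      omega
    -- find a failing entry
    have hnotall : ¬ ∀ a ∈ margList v X.toList, (fun x => decide (τ ≤ x)) a = true := by
      intro hall
      have := List.countP_eq_length.mpr hall
      omega
    push_neg at hnotall
    obtain ⟨a, hamem, hanot⟩ := hnotall
    have halt : a < τ := lt_of_not_ge (by simpa using hanot)
    obtain ⟨j, hj, haeq⟩ := by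
      simpa only [margList, List.mem_map, List.mem_range] using hamem
    set x := X.toList.get ⟨j, hj⟩ with hxdef
    have hxX : x ∈ X := by
      rw [← X.toList_toFinset]; exact List.mem_toFinset.mpr (X.toList.get_mem _)
    -- x ∉ take j
    have htakex : X.toList.take (j+1) = X.toList.take j ++ [x] := by
      rw [← List.concat_eq_append, hxdef, List.get_eq_getElem]
      exact (List.take_concat_get _).symm
    have hnodup1 : (X.toList.take (j+1)).Nodup :=
      (List.take_sublist _ _).nodup X.nodup_toList
    have hxnotin : x ∉ X.toList.take j := fun h =>
      (List.nodup_append'.mp (htakex ▸ hnodup1)).2.2 h (List.mem_singleton_self x)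
    -- submodularity: marginal of x at end of X is < τ
    have hsubset : (X.toList.take j).toFinset ⊆ X.erase x := by
      intro b hb
      rw [Finset.mem_erase]
      constructor
      · rintro rfl; exact hxnotin (List.mem_toFinset.mp hb)
      · rw [← X.toList_toFinset]
        exact List.mem_toFinset.mpr ((List.take_sublist _ _).mem (List.mem_toFinset.mp hb))
    have hxne : x ∉ X.erase x := Finset.notMem_erase x X
    have hmarg : v X - v (X.erase x) < τ := by
      have hmono := hsub.2 _ _ hsubset x hxne
      rw [Finset.insert_erase hxX] at hmono
      have : insert x (X.toList.take j).toFinset = (X.toList.take (j+1)).toFinset := by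
        ext b; simp [htakex, or_comm]
      rw [this] at hmono
      calc v X - v (X.erase x) ≤ _ := hmono
        _ = a := haeq
        _ < τ := halt
    -- ordering with x last
    set l' := (X.erase x).toList with hl'def
    have hl' : IsOrdering l' (X.erase x) := ⟨Finset.nodup_toList _, Finset.toList_toFinset _⟩
    have hxnotl' : x ∉ l' := fun h =>
      hxne (by rw [← Finset.toList_toFinset (X.erase x)]; exact List.mem_toFinset.mpr h)
    have hl''fin : (l' ++ [x]).toFinset = X := by
      ext b
      rcases eq_or_ne b x with rfl | hne
      · simp [hxX]
      · simp [hl'def, hne]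
    have hl'' : IsOrdering (l' ++ [x]) X := by
      refine ⟨?_, hl''fin⟩
      rw [List.nodup_append']
      exact ⟨Finset.nodup_toList _, List.nodup_singleton x,
        fun b hb hb' => hxnotl' (by rwa [List.mem_singleton.mp hb'] at hb)⟩
    have h2 := hβ X (l' ++ [x]) hl''
    rw [margList_append_singleton, List.countP_append] at h2
    have hlast : v (l' ++ [x]).toFinset - v l'.toFinset = v X - v (X.erase x) := by
      rw [hl''fin, hl'def, Finset.toList_toFinset]
    have hβeq : β X = β (X.erase x) := by
      rw [h2, hβ (X.erase x) l' hl', hlast]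
      simp [decide_eq_false (not_le.mpr hmarg)]
    obtain ⟨A, B, hAB, hU, h3, h4⟩ := ih (X.erase x) (Finset.erase_ssubset hxX)
    refine ⟨A, insert x B, ?_, ?_, by rw [hβeq, h3], h4⟩
    · rw [Finset.disjoint_insert_right]
      refine ⟨fun hxA => ?_, hAB⟩
      have : x ∈ X.erase x := hU ▸ Finset.mem_union_left B hxA
      exact hxne this
    · rw [Finset.union_insert, hU, Finset.insert_erase hxX]
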